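/- For a finite non-empty set of words S, the prefix tree of S, when converted to a regular expression by interpreting branching internal nodes as disjunctions, chains as concatenations, and adding ? at internal nodes whose root-path spells a word of S, yields a regular expression r with L(r) = S. Moreover, since no node of the prefix tree has two outgoing edges with the same label, r is deterministic. -/

import Mathlib

open Computability

/-- Regular expressions (with explicit parentheses) built from ∅, ε, letters,
concatenation, union, optional `?` and one-or-more `⁺`. -/
inductive PRE (α : Type) where
  | empty : PRE α
  | eps : PRE α
  | char : α → PRE α
  | paren : PRE α → PRE α
  | cat : PRE α → PRE α → PRE α
  | alt : PRE α → PRE α → PRE α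
  | opt : PRE α → PRE α
  | pos : PRE α → PRE α

/-- The language of a regular expression. -/
def PRE.lang {α : Type} : PRE α → Language α
  | .empty => 0
  | .eps => 1
  | .char a => {[a]}
  | .paren r => r.lang
  | .cat r s => r.lang * s.lang
  | .alt r s => r.lang + s.lang
  | .opt r => r.lang + 1
  | .pos r => r.lang * (r.lang)∗

/-- Replace the i-th occurrence of each letter `a` by the marked symbol `(a, i)`,
threading occurrence counters. -/
def PRE.markAux {α : Type} [DecidableEq α] : PRE α → (α → ℕ) → PRE (α × ℕ) × (α → ℕ)
  | .empty, c => (.empty, c)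
  | .eps, c => (.eps, c)
  | .char a, c => (.char (a, c a + 1), fun b => if b = a then c a + 1 else c b)
  | .paren r, c => let p := r.markAux c; (.paren p.1, p.2)
  | .cat r s, c => let p := r.markAux c; let q := s.markAux p.2; (.cat p.1 q.1, q.2)
  | .alt r s, c => let p := r.markAux c; let q := s.markAux p.2; (.alt p.1 q.1, q.2)
  | .opt r, c => let p := r.markAux c; (.opt p.1, p.2)
  | .pos r, c => let p := r.markAux c; (.pos p.1, p.2)

/-- The marked version r̄ of a regular expression. -/
def PRE.mark {α : Type} [DecidableEq α] (r : PRE α) : PRE (α × ℕ) :=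
  (r.markAux fun _ => 0).1

/-- A regular expression is deterministic (one-unambiguous) if its marked version
admits no two words w·a⁽ⁱ⁾·v and w·a⁽ʲ⁾·v′ with i ≠ j. -/
def PRE.Deterministic {α : Type} [DecidableEq α] (r : PRE α) : Prop :=
  ∀ (w v v' : List (α × ℕ)) (a : α) (i j : ℕ),
    w ++ (a, i) :: v ∈ r.mark.lang → w ++ (a, j) :: v' ∈ r.mark.lang → i = j

/-- Number of occurrences of the letter `a` in `r`. -/
def PRE.rep {α : Type} [DecidableEq α] : PRE α → α → ℕ
  | .empty, _ => 0
  | .eps, _ => 0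
  | .char b, a => if b = a then 1 else 0
  | .paren r, a => r.rep a
  | .cat r s, a => r.rep a + s.rep a
  | .alt r s, a => r.rep a + s.rep a
  | .opt r, a => r.rep a
  | .pos r, a => r.rep a

/-- `r` is a k-occurrence regular expression: every letter occurs at most `k` times. -/
def PRE.IsKORE {α : Type} [DecidableEq α] (k : ℕ) (r : PRE α) : Prop :=
  ∀ a, r.rep a ≤ k

/-- Length of the string representation (letters, ∅, ε, operators ·, +, ?, ⁺ and
parentheses each count as one character). -/
def PRE.len {α : Type} : PRE α → ℕ
  | .empty => 1
  | .eps => 1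
  | .char _ => 1
  | .paren r => r.len + 2
  | .cat r s => r.len + s.len + 1
  | .alt r s => r.len + s.len + 1
  | .opt r => r.len + 1
  | .pos r => r.len + 1

/-- A prefix tree (trie): each node records whether it is accepting and carries a
list of labeled children. -/
inductive Trie (α : Type) where
  | node : Bool → List (α × Trie α) → Trie α

/-- The word spelled by a root path is in the trie iff the path ends in an
accepting node. -/
def Trie.accepts {α : Type} : Trie α → List α → Prop
  | .node acc _, [] => acc = true
  | .node _ ch, a :: w => ∃ p ∈ ch, p.1 = a ∧ Trie.accepts p.2 w

/-- A node is a leaf if it has no children. -/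
def Trie.isLeaf {α : Type} : Trie α → Bool
  | .node _ ch => ch.isEmpty

/-- Disjunction of a nonempty list of expressions. -/
def listAlt {α : Type} : PRE α → List (PRE α) → PRE α
  | r, [] => r
  | r, s :: rest => .alt r (listAlt s rest)

mutual
  /-- Conversion of a prefix tree to a regular expression: branching nodes become
  disjunctions, chains become concatenations, and accepting internal nodes get `?`. -/
  def Trie.toRE {α : Type} : Trie α → PRE α
    | .node acc ch =>
        match ch with
        | [] => .eps
        | c :: cs =>
            let body := listAlt (Trie.edgeRE c) (Trie.edgeList cs)
            if acc then .opt body else body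

  def Trie.edgeRE {α : Type} : α × Trie α → PRE α
    | (a, t) => if t.isLeaf then .char a else .cat (.char a) (Trie.toRE t)

  def Trie.edgeList {α : Type} : List (α × Trie α) → List (PRE α)
    | [] => []
    | c :: cs => Trie.edgeRE c :: Trie.edgeList cs
end

/-- Well-formedness of a prefix tree: no node has two outgoing edges with the same
label, and every leaf is accepting. -/
inductive Trie.WF {α : Type} : Trie α → Prop
  | mk (acc : Bool) (ch : List (α × Trie α)) :
      (ch.map Prod.fst).Nodup →
      (ch = [] → acc = true) →
      (∀ p ∈ ch, Trie.WF p.2) →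
      Trie.WF (.node acc ch)

-- ===== auxiliary development =====
section Aux
variable {α : Type}

lemma sizeOf_snd_lt {p : α × Trie α} {ch : List (α × Trie α)} (hp : p ∈ ch)
    {acc : Bool} : sizeOf p.2 < sizeOf (Trie.node acc ch) := by
  have h1 := List.sizeOf_lt_of_mem hp
  obtain ⟨a, t⟩ := p
  simp at h1 ⊢
  omega

lemma listAlt_lang (r : PRE α) (rs : List (PRE α)) (w : List α) :
    w ∈ (listAlt r rs).lang ↔ w ∈ r.lang ∨ ∃ s ∈ rs, w ∈ s.lang := by
  induction rs generalizing r with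
  | nil => simp [listAlt]
  | cons s rest ih =>
      have : listAlt r (s :: rest) = .alt r (listAlt s rest) := rfl
      rw [this]
      simp only [PRE.lang, Language.mem_add, ih]
      simp only [List.mem_cons]
      constructor
      · rintro (h | h | ⟨x, hx, h⟩)
        · exact Or.inl h
        · exact Or.inr ⟨s, Or.inl rfl, h⟩
        · exact Or.inr ⟨x, Or.inr hx, h⟩
      · rintro (h | ⟨x, (rfl | hx), h⟩)
        · exact Or.inl h
        · exact Or.inr (Or.inl h)
        · exact Or.inr (Or.inr ⟨x, hx, h⟩)

lemma edgeList_eq_map (cs : List (α × Trie α)) :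
    Trie.edgeList cs = cs.map Trie.edgeRE := by
  induction cs with
  | nil => simp [Trie.edgeList]
  | cons c cs ih => simp [Trie.edgeList, ih]

lemma accepts_leaf {acc : Bool} {w : List α} :
    Trie.accepts (.node acc []) w ↔ w = [] ∧ acc = true := by
  cases w <;> simp [Trie.accepts]


lemma edge_lang (a : α) (t : Trie α) (hWF : t.WF)
    (h : ∀ w, w ∈ t.toRE.lang ↔ t.accepts w) (w : List α) :
    w ∈ (Trie.edgeRE (a, t)).lang ↔ ∃ u, w = a :: u ∧ t.accepts u := by
  rw [show Trie.edgeRE (a, t) = if t.isLeaf then .char a else .cat (.char a) t.toRE from rfl]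
  split
  · rename_i hl
    obtain ⟨acc, ch⟩ := t
    have hch : ch = [] := by simpa [Trie.isLeaf, List.isEmpty_iff] using hl
    subst hch
    cases hWF with
    | mk _ _ hnd hacc _ =>
      simp only [PRE.lang, Set.mem_singleton_iff, accepts_leaf, hacc rfl, and_true]
      constructor
      · rintro rfl; exact ⟨[], rfl, rfl⟩
      · rintro ⟨u, rfl, rfl⟩; rfl
  · rw [show (PRE.cat (.char a) t.toRE).lang = {[a]} * t.toRE.lang from rfl,
      Language.mem_mul]
    constructor
    · rintro ⟨x, hx, y, hy, rfl⟩
      obtain rfl : x = [a] := hx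
      exact ⟨y, rfl, (h y).1 hy⟩
    · rintro ⟨u, rfl, hu⟩
      exact ⟨[a], rfl, u, (h u).2 hu, rfl⟩

lemma toRE_lang : ∀ (T : Trie α), T.WF → ∀ w, w ∈ T.toRE.lang ↔ T.accepts w := by
  have key : ∀ n, ∀ T : Trie α, sizeOf T ≤ n → T.WF → ∀ w, w ∈ T.toRE.lang ↔ T.accepts w := by
    intro n
    induction n using Nat.strong_induction_on with
    | _ n ih =>
      rintro ⟨acc, ch⟩ hsz hWF w
      cases hWF with
      | mk _ _ hnd hacc hch =>
        match ch with
        | [] =>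
            rw [show Trie.toRE (.node acc []) = .eps from rfl]
            simp [PRE.lang, accepts_leaf, Language.mem_one, hacc rfl]
        | e :: es =>
            have hsub : ∀ p ∈ e :: es, sizeOf p.2 < n :=
              fun p hp => lt_of_lt_of_le (sizeOf_snd_lt hp (acc := acc)) hsz
            have hrec : ∀ p ∈ e :: es, ∀ u, u ∈ p.2.toRE.lang ↔ p.2.accepts u := by
              intro p hp u
              exact ih (sizeOf p.2) (hsub p hp) p.2 le_rfl (hch p hp) u
            have hbody : ∀ u, u ∈ (listAlt (Trie.edgeRE e) (Trie.edgeList es)).lang ↔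
                ∃ p ∈ e :: es, ∃ v, u = p.1 :: v ∧ p.2.accepts v := by
              intro u
              rw [listAlt_lang, edgeList_eq_map]
              constructor
              · rintro (h | ⟨s, hs, h⟩)
                · obtain ⟨v, rfl, hv⟩ := (edge_lang e.1 e.2 (hch e (by simp))
                    (hrec e (by simp)) u).1 (by simpa using h)
                  exact ⟨e, by simp, v, rfl, hv⟩
                · rw [List.mem_map] at hs
                  obtain ⟨p, hp, rfl⟩ := hs
                  obtain ⟨v, rfl, hv⟩ := (edge_lang p.1 p.2 (hch p (by simp [hp]))
                    (hrec p (by simp [hp])) u).1 (by simpa using h)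
                  exact ⟨p, by simp [hp], v, rfl, hv⟩
              · rintro ⟨p, hp, v, rfl, hv⟩
                rcases List.mem_cons.1 hp with rfl | hp'
                · exact Or.inl ((edge_lang p.1 p.2 (hch p hp) (hrec p hp) _).2 ⟨v, rfl, hv⟩)
                · exact Or.inr ⟨Trie.edgeRE p, List.mem_map_of_mem (f := Trie.edgeRE) hp',
                    (edge_lang p.1 p.2 (hch p hp) (hrec p hp) _).2 ⟨v, rfl, hv⟩⟩
            have haccw : Trie.accepts (.node acc (e :: es)) w ↔
                (w = [] ∧ acc = true) ∨ ∃ p ∈ e :: es, ∃ v, w = p.1 :: v ∧ p.2.accepts v := by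
              cases w with
              | nil => simp [Trie.accepts]
              | cons b u =>
                  simp only [Trie.accepts, List.cons.injEq]
                  constructor
                  · rintro ⟨p, hp, rfl, hu⟩
                    exact Or.inr ⟨p, hp, u, ⟨rfl, rfl⟩, hu⟩
                  · rintro (⟨h, _⟩ | h)
                    · exact absurd h (by simp)
                    · obtain ⟨p, hp, v, h12, hv⟩ := h
                      obtain ⟨h1, h2⟩ := h12
                      subst h1; subst h2
                      exact ⟨p, hp, rfl, hv⟩
            rw [show Trie.toRE (.node acc (e :: es)) =
              (if acc then .opt (listAlt (Trie.edgeRE e) (Trie.edgeList es))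
               else listAlt (Trie.edgeRE e) (Trie.edgeList es)) from rfl]
            rw [haccw]
            cases acc with
            | true =>
                rw [if_pos rfl]
                simp only [PRE.lang, Language.mem_add, Language.mem_one, hbody]
                constructor
                · rintro (h | h)
                  · exact Or.inr h
                  · exact Or.inl ⟨h, by trivial⟩
                · rintro (h | h)
                  · exact Or.inr h.1
                  · exact Or.inl h
            | false =>
                rw [if_neg (by simp), hbody]
                simp
  exact fun T => key (sizeOf T) T le_rfl


/-- At every node, the first components of the edge labels are pairwise distinct. -/
inductive FstNodup : Trie (α × ℕ) → Prop
  | mk (acc : Bool) (ch : List ((α × ℕ) × Trie (α × ℕ))) :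
      (ch.map fun p => p.1.1).Nodup →
      (∀ p ∈ ch, FstNodup p.2) →
      FstNodup (.node acc ch)

lemma accepts_det : ∀ (w : List (α × ℕ)) (T : Trie (α × ℕ)), FstNodup T →
    ∀ (v v' : List (α × ℕ)) (a : α) (i j : ℕ),
    T.accepts (w ++ (a, i) :: v) → T.accepts (w ++ (a, j) :: v') → i = j := by
  intro w
  induction w with
  | nil =>
      rintro ⟨acc, ch⟩ hF v v' a i j h1 h2
      cases hF with
      | mk _ _ hnd hsub =>
        obtain ⟨p, hp, hp1, _⟩ := h1
        obtain ⟨q, hq, hq1, _⟩ := h2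
        have hpq : p = q :=
          List.inj_on_of_nodup_map hnd hp hq (by rw [hp1, hq1])
        have : ((a, i) : α × ℕ) = (a, j) := by rw [← hp1, hpq, hq1]
        exact congrArg Prod.snd this
  | cons x w ih =>
      rintro ⟨acc, ch⟩ hF v v' a i j h1 h2
      cases hF with
      | mk _ _ hnd hsub =>
        obtain ⟨p, hp, hp1, hpa⟩ := h1
        obtain ⟨q, hq, hq1, hqa⟩ := h2
        have hpq : p = q :=
          List.inj_on_of_nodup_map hnd hp hq (by rw [hp1, hq1])
        subst hpq
        exact ih p.2 (hsub p hp) v v' a i j hpa hqa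

end Aux

section Mark
variable {α : Type} [DecidableEq α]

mutual
  /-- Marked version of a trie, mirroring the traversal order of `PRE.markAux`. -/
  def markTrie : Trie α → (α → ℕ) → Trie (α × ℕ) × (α → ℕ)
    | .node acc ch, c =>
        let p := markChildren ch c
        (.node acc p.1, p.2)

  def markChildren : List (α × Trie α) → (α → ℕ) → List ((α × ℕ) × Trie (α × ℕ)) × (α → ℕ)
    | [], c => ([], c)
    | (a, t) :: cs, c =>
        let c1 := fun b => if b = a then c a + 1 else c b
        let p := markTrie t c1
        let q := markChildren cs p.2
        (((a, c a + 1), p.1) :: q.1, q.2)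
end

lemma markTrie_node (acc : Bool) (ch : List (α × Trie α)) (c : α → ℕ) :
    markTrie (.node acc ch) c = (.node acc (markChildren ch c).1, (markChildren ch c).2) := by
  rw [markTrie]

lemma markChildren_nil (c : α → ℕ) : markChildren ([] : List (α × Trie α)) c = ([], c) := by
  rw [markChildren]

lemma markChildren_cons (a : α) (t : Trie α) (cs : List (α × Trie α)) (c : α → ℕ) :
    markChildren ((a, t) :: cs) c =
      (((a, c a + 1), (markTrie t (fun b => if b = a then c a + 1 else c b)).1) ::
        (markChildren cs (markTrie t (fun b => if b = a then c a + 1 else c b)).2).1,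
       (markChildren cs (markTrie t (fun b => if b = a then c a + 1 else c b)).2).2) := by
  rw [markChildren]

lemma markChildren_map_fst : ∀ (ch : List (α × Trie α)) (c : α → ℕ),
    (markChildren ch c).1.map (fun p => p.1.1) = ch.map Prod.fst := by
  intro ch
  induction ch with
  | nil => intro c; rw [markChildren_nil]; rfl
  | cons e cs ih =>
      intro c
      obtain ⟨a, t⟩ := e
      rw [markChildren_cons]
      simp [ih]

lemma markTrie_isLeaf (t : Trie α) (c : α → ℕ) :
    (markTrie t c).1.isLeaf = t.isLeaf := by
  obtain ⟨acc, ch⟩ := t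
  rw [markTrie_node]
  cases ch with
  | nil => rw [markChildren_nil]; rfl
  | cons e cs =>
      obtain ⟨a, t⟩ := e
      rw [markChildren_cons]
      rfl

lemma markChildren_mem : ∀ (ch : List (α × Trie α)) (c : α → ℕ),
    ∀ p ∈ (markChildren ch c).1, ∃ q ∈ ch, ∃ c0, p.2 = (markTrie q.2 c0).1 := by
  intro ch
  induction ch with
  | nil => intro c p hp; rw [markChildren_nil] at hp; simp at hp
  | cons e cs ih =>
      intro c p hp
      obtain ⟨a, t⟩ := e
      rw [markChildren_cons] at hp
      rcases List.mem_cons.1 hp with rfl | hp'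
      · exact ⟨(a, t), by simp, _, rfl⟩
      · obtain ⟨q, hq, c0, h⟩ := ih _ p hp'
        exact ⟨q, by simp [hq], c0, h⟩

lemma markTrie_wf : ∀ (t : Trie α), t.WF → ∀ c,
    (markTrie t c).1.WF ∧ FstNodup (markTrie t c).1 := by
  have key : ∀ n, ∀ t : Trie α, sizeOf t ≤ n → t.WF → ∀ c,
      (markTrie t c).1.WF ∧ FstNodup (markTrie t c).1 := by
    intro n
    induction n using Nat.strong_induction_on with
    | _ n ih =>
      rintro ⟨acc, ch⟩ hsz hWF c
      cases hWF with
      | mk _ _ hnd hacc hch =>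
        rw [markTrie_node]
        have hmap := markChildren_map_fst ch c
        have hnd' : ((markChildren ch c).1.map fun p => p.1.1).Nodup := by
          rw [hmap]; exact hnd
        have hsubwf : ∀ p ∈ (markChildren ch c).1, p.2.WF ∧ FstNodup p.2 := by
          intro p hp
          obtain ⟨q, hq, c0, hpq⟩ := markChildren_mem ch c p hp
          have hlt : sizeOf q.2 < n := lt_of_lt_of_le (sizeOf_snd_lt hq (acc := acc)) hsz
          rw [hpq]
          exact ih (sizeOf q.2) hlt q.2 le_rfl (hch q hq) c0
        refine ⟨?_, ?_⟩
        · refine Trie.WF.mk _ _ ?_ ?_ (fun p hp => (hsubwf p hp).1)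
          · have : ((markChildren ch c).1.map Prod.fst).map Prod.fst =
                (markChildren ch c).1.map fun p => p.1.1 := by
              rw [List.map_map]; rfl
            exact List.Nodup.of_map Prod.fst (by rw [this]; exact hnd')
          · intro h
            apply hacc
            have := markChildren_map_fst ch c
            rw [h] at this
            simpa using this.symm
        · exact FstNodup.mk _ _ hnd' (fun p hp => (hsubwf p hp).2)
  exact fun t hWF c => key (sizeOf t) t le_rfl hWF c


lemma markAux_edge (n : ℕ)
    (ih : ∀ m < n, ∀ t : Trie α, sizeOf t ≤ m → ∀ c,
      PRE.markAux t.toRE c = ((markTrie t c).1.toRE, (markTrie t c).2))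
    (a : α) (t : Trie α) (hlt : sizeOf t < n) (c : α → ℕ) :
    PRE.markAux (Trie.edgeRE (a, t)) c =
      (Trie.edgeRE ((a, c a + 1), (markTrie t (fun b => if b = a then c a + 1 else c b)).1),
       (markTrie t (fun b => if b = a then c a + 1 else c b)).2) := by
  set c1 : α → ℕ := fun b => if b = a then c a + 1 else c b with hc1
  by_cases hl : t.isLeaf
  · have hl' : (markTrie t c1).1.isLeaf = true := by rw [markTrie_isLeaf]; exact hl
    rw [show Trie.edgeRE (a, t) = if t.isLeaf then .char a else .cat (.char a) t.toRE from rfl,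
        if_pos hl,
        show Trie.edgeRE ((a, c a + 1), (markTrie t c1).1) =
          if (markTrie t c1).1.isLeaf then .char (a, c a + 1)
          else .cat (.char (a, c a + 1)) (markTrie t c1).1.toRE from rfl,
        if_pos hl']
    obtain ⟨acc, ch⟩ := t
    have hch : ch = [] := by simpa [Trie.isLeaf, List.isEmpty_iff] using hl
    subst hch
    rw [markTrie_node, markChildren_nil]
    simp [PRE.markAux, hc1]
  · have hl' : ¬ (markTrie t c1).1.isLeaf = true := by rw [markTrie_isLeaf]; exact hl
    rw [show Trie.edgeRE (a, t) = if t.isLeaf then .char a else .cat (.char a) t.toRE from rfl,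
        if_neg hl,
        show Trie.edgeRE ((a, c a + 1), (markTrie t c1).1) =
          if (markTrie t c1).1.isLeaf then .char (a, c a + 1)
          else .cat (.char (a, c a + 1)) (markTrie t c1).1.toRE from rfl,
        if_neg hl']
    have hrec := ih (sizeOf t) hlt t le_rfl c1
    simp only [PRE.markAux]
    rw [hrec]

lemma markAux_list (n : ℕ)
    (ih : ∀ m < n, ∀ t : Trie α, sizeOf t ≤ m → ∀ c,
      PRE.markAux t.toRE c = ((markTrie t c).1.toRE, (markTrie t c).2)) :
    ∀ (es : List (α × Trie α)) (e : α × Trie α),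
    sizeOf e.2 < n → (∀ p ∈ es, sizeOf p.2 < n) → ∀ c,
    ∃ e' es' c', markChildren (e :: es) c = (e' :: es', c') ∧
      PRE.markAux (listAlt (Trie.edgeRE e) (Trie.edgeList es)) c =
        (listAlt (Trie.edgeRE e') (Trie.edgeList es'), c') := by
  intro es
  induction es with
  | nil =>
      rintro ⟨a, t⟩ hlt _ c
      set c1 : α → ℕ := fun b => if b = a then c a + 1 else c b with hc1
      refine ⟨((a, c a + 1), (markTrie t c1).1), [], (markTrie t c1).2, ?_, ?_⟩
      · rw [markChildren_cons, ← hc1, markChildren_nil]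
      · rw [show listAlt (Trie.edgeRE (a, t)) (Trie.edgeList []) = Trie.edgeRE (a, t) from rfl]
        rw [markAux_edge n ih a t hlt c, ← hc1]
        rfl
  | cons f fs ihes =>
      rintro ⟨a, t⟩ hlt hes c
      set c1 : α → ℕ := fun b => if b = a then c a + 1 else c b with hc1
      obtain ⟨f', fs', c'', hmc, hma⟩ := ihes f (hes f (by simp))
        (fun p hp => hes p (by simp [hp])) (markTrie t c1).2
      refine ⟨((a, c a + 1), (markTrie t c1).1), f' :: fs', c'', ?_, ?_⟩
      · rw [markChildren_cons, ← hc1, hmc]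
      · rw [show listAlt (Trie.edgeRE (a, t)) (Trie.edgeList (f :: fs)) =
          .alt (Trie.edgeRE (a, t)) (listAlt (Trie.edgeRE f) (Trie.edgeList fs)) from rfl]
        simp only [PRE.markAux]
        rw [markAux_edge n ih a t hlt c, ← hc1]
        rw [hma]
        rfl

lemma markAux_toRE : ∀ (t : Trie α) (c : α → ℕ),
    PRE.markAux t.toRE c = ((markTrie t c).1.toRE, (markTrie t c).2) := by
  have key : ∀ n, ∀ t : Trie α, sizeOf t ≤ n → ∀ c,
      PRE.markAux t.toRE c = ((markTrie t c).1.toRE, (markTrie t c).2) := by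
    intro n
    induction n using Nat.strong_induction_on with
    | _ n ih =>
      rintro ⟨acc, ch⟩ hsz c
      match ch with
      | [] =>
          rw [markTrie_node, markChildren_nil,
            show Trie.toRE (.node acc []) = .eps from rfl]
          simp [PRE.markAux]
          rfl
      | e :: es =>
          have hsub : ∀ p ∈ e :: es, sizeOf p.2 < n :=
            fun p hp => lt_of_lt_of_le (sizeOf_snd_lt hp (acc := acc)) hsz
          obtain ⟨e', es', c', hmc, hma⟩ := markAux_list n ih es e (hsub e (by simp))
            (fun p hp => hsub p (by simp [hp])) c
          rw [markTrie_node, hmc,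
            show Trie.toRE (.node acc (e :: es)) =
              (if acc then .opt (listAlt (Trie.edgeRE e) (Trie.edgeList es))
               else listAlt (Trie.edgeRE e) (Trie.edgeList es)) from rfl,
            show Trie.toRE (.node acc (e' :: es')) =
              (if acc then .opt (listAlt (Trie.edgeRE e') (Trie.edgeList es'))
               else listAlt (Trie.edgeRE e') (Trie.edgeList es')) from rfl]
          cases acc with
          | true =>
              rw [if_pos rfl, if_pos rfl]
              simp only [PRE.markAux]
              rw [hma]
          | false =>
              rw [if_neg (by simp), if_neg (by simp)]
              exact hma
  exact fun t c => key (sizeOf t) t le_rfl c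

end Mark

/-- Converting the prefix tree of a finite non-empty set of words S to a regular
expression yields an expression r with L(r) = S; moreover r is deterministic. -/
theorem stmt11 {α : Type} [DecidableEq α] (S : Set (List α))
    (hne : S.Nonempty) (hfin : S.Finite)
    (T : Trie α) (hWF : T.WF) (hT : ∀ w : List α, T.accepts w ↔ w ∈ S) :
    (∀ w : List α, w ∈ T.toRE.lang ↔ w ∈ S) ∧ T.toRE.Deterministic := by
  have hlang := toRE_lang T hWF
  refine ⟨fun w => (hlang w).trans (hT w), ?_⟩
  intro w v v' a i j h1 h2
  have heq := markAux_toRE T (fun _ => 0)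
  set M := (markTrie T (fun _ => 0)).1 with hM
  have hmark : T.toRE.mark = M.toRE := by rw [PRE.mark, heq]
  rw [hmark] at h1 h2
  obtain ⟨hWFM, hF⟩ := markTrie_wf T hWF (fun _ => 0)
  exact accepts_det w M hF v v' a i j ((toRE_lang M hWFM _).1 h1) ((toRE_lang M hWFM _).1 h2)
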